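/- Let δ > 0, B > 0, let H_N be an N×N real symmetric matrix with ‖H_N‖ ≤ B, and let θ be a real number with 0 < |θ| ≤ B. Suppose z_θ is a real number with m_N(z_θ) = 1/θ and either z_θ ≥ λ_1(H_N) + 2δ or z_θ ≤ λ_N(H_N) − 2δ. Then for every real ξ with |ξ| ≤ δ, one has |ξ|/(8B³) ≤ |m_N'(z_θ + ξ) − m_N'(z_θ)| ≤ 8|ξ|/δ³. -/

import Mathlib

open MeasureTheory Matrix Filter

/-- Operator norm (ℓ²→ℓ²) of a real matrix. -/
noncomputable def opNorm {m n : ℕ} (A : Matrix (Fin m) (Fin n) ℝ) : ℝ :=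
  ‖LinearMap.toContinuousLinearMap (Matrix.toEuclideanLin A)‖

/-- The eigenvalues of a Hermitian matrix, listed in decreasing order (with multiplicity);
junk value `0` if the matrix is not Hermitian. -/
noncomputable def eigDesc {𝕜 : Type*} [RCLike 𝕜] {N : ℕ} (A : Matrix (Fin N) (Fin N) 𝕜) :
    Fin N → ℝ :=
  if h : A.IsHermitian then fun k => h.eigenvalues (Tuple.sort h.eigenvalues k.rev) else 0

set_option maxHeartbeats 1000000 in

lemma key_aux {N : ℕ} (hN : 1 ≤ N) (a : Fin N → ℝ) (δ θ B ξ : ℝ)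
    (hδ : 0 < δ) (hθ : 0 < θ) (hθB : θ ≤ B) (hξ : |ξ| ≤ δ)
    (ha : ∀ k, 2 * δ ≤ a k)
    (hz : (1 / (N : ℝ)) * ∑ k, 1 / a k = 1 / θ) :
    |ξ| / (8 * B ^ 3)
        ≤ |(-(1 / (N : ℝ)) * ∑ k, 1 / (a k + ξ) ^ 2)
            - (-(1 / (N : ℝ)) * ∑ k, 1 / (a k) ^ 2)| ∧
    |(-(1 / (N : ℝ)) * ∑ k, 1 / (a k + ξ) ^ 2)
        - (-(1 / (N : ℝ)) * ∑ k, 1 / (a k) ^ 2)| ≤ 8 * |ξ| / δ ^ 3 := by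
  have hNpos : (0:ℝ) < N := by exact_mod_cast hN
  have hB : 0 < B := lt_of_lt_of_le hθ hθB
  have hxi := abs_le.mp hξ
  set c : Fin N → ℝ := fun k => (2 * a k + ξ) / ((a k) ^ 2 * (a k + ξ) ^ 2) with hc
  have hak : ∀ k, 0 < a k := fun k => lt_of_lt_of_le (by linarith) (ha k)
  have haξ : ∀ k, δ ≤ a k + ξ := fun k => by have := ha k; linarith [hxi.1]
  have haξ0 : ∀ k, 0 < a k + ξ := fun k => lt_of_lt_of_le hδ (haξ k)
  have hid : ∀ k, 1 / (a k) ^ 2 - 1 / (a k + ξ) ^ 2 = ξ * c k := by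
    intro k
    have h1 : a k ≠ 0 := (hak k).ne'
    have h2 : a k + ξ ≠ 0 := (haξ0 k).ne'
    simp only [hc]
    rw [div_sub_div _ _ (pow_ne_zero 2 h1) (pow_ne_zero 2 h2), ← mul_div_assoc]
    congr 1; ring
  have hE : (-(1 / (N : ℝ)) * ∑ k, 1 / (a k + ξ) ^ 2)
      - (-(1 / (N : ℝ)) * ∑ k, 1 / (a k) ^ 2) = (ξ / N) * ∑ k, c k := by
    have h3 : (∑ k, 1 / (a k) ^ 2) - (∑ k, 1 / (a k + ξ) ^ 2) = ξ * ∑ k, c k := by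
      rw [← Finset.sum_sub_distrib, Finset.mul_sum]
      exact Finset.sum_congr rfl fun k _ => hid k
    have hN0 : (N:ℝ) ≠ 0 := hNpos.ne'
    linear_combination ((1:ℝ) / N) * h3
  have hlow : ∀ k, 2 / 3 * (1 / a k) ^ 3 ≤ c k := by
    intro k
    have hA := ha k
    have hA0 := hak k
    have h2 := haξ0 k
    have e : 2 / 3 * (1 / a k) ^ 3 = (2 / 3) / (a k) ^ 3 := by ring
    rw [e, hc]
    rw [div_le_div_iff₀ (by positivity) (by positivity)]
    have h6 : (a k + ξ) ^ 2 ≤ 9 / 4 * (a k) ^ 2 := by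
      nlinarith [mul_nonneg (show (0:ℝ) ≤ a k / 2 - ξ by linarith [hxi.2])
        (show (0:ℝ) ≤ 5 / 2 * a k + ξ by linarith [hxi.1])]
    nlinarith [mul_le_mul_of_nonneg_left h6 (sq_nonneg (a k)),
      mul_nonneg (show (0:ℝ) ≤ a k / 2 + ξ by linarith [hxi.1]) (pow_pos hA0 3).le]
  have hupp : ∀ k, c k ≤ 8 / δ ^ 3 := by
    intro k
    have hA := ha k
    have hA0 := hak k
    have h2 := haξ0 k
    rw [hc]
    rw [div_le_div_iff₀ (by positivity) (by positivity)]
    have h6 : (a k / 2) ^ 2 ≤ (a k + ξ) ^ 2 := by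
      nlinarith [mul_nonneg (show (0:ℝ) ≤ a k / 2 + ξ by linarith [hxi.1])
        (show (0:ℝ) ≤ 3 / 2 * a k + ξ by linarith [hxi.1])]
    have h7 : δ ^ 3 ≤ (a k / 2) ^ 3 := by
      apply pow_le_pow_left₀ hδ.le (by linarith)
    nlinarith [mul_le_mul_of_nonneg_left h6 (sq_nonneg (a k)),
      mul_le_mul_of_nonneg_left h7 (show (0:ℝ) ≤ 2 * a k + ξ by linarith [hxi.1]),
      mul_nonneg (show (0:ℝ) ≤ 14 * a k - ξ by linarith [hxi.2]) (pow_pos hA0 3).le]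
  have hcnn : ∀ k ∈ Finset.univ, (0:ℝ) ≤ c k := fun k _ =>
    le_trans (by have := hak k; positivity) (hlow k)
  have hsumnn : 0 ≤ ∑ k, c k := Finset.sum_nonneg hcnn
  have habs : |(-(1 / (N : ℝ)) * ∑ k, 1 / (a k + ξ) ^ 2)
      - (-(1 / (N : ℝ)) * ∑ k, 1 / (a k) ^ 2)| = |ξ| / N * ∑ k, c k := by
    rw [hE, abs_mul, abs_div, abs_of_nonneg hsumnn, abs_of_pos hNpos]
  -- sum of 1/a
  have hS1 : ∑ k, 1 / a k = (N:ℝ) / θ := by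
    rw [eq_div_iff hθ.ne']
    have : (N:ℝ) * ((1 / (N : ℝ)) * ∑ k, 1 / a k) = (N:ℝ) * (1/θ) := by rw [hz]
    field_simp at this ⊢
    linarith
  have hJ := pow_sum_div_card_le_sum_pow (s := (Finset.univ : Finset (Fin N)))
    (f := fun k => 1 / a k) (fun i _ => by have := hak i; positivity) 2
  simp only [Finset.card_univ, Fintype.card_fin] at hJ
  rw [hS1] at hJ
  have hJ' : (N:ℝ) / θ ^ 3 ≤ ∑ k, (1 / a k) ^ 3 := by
    have e : ((N:ℝ)/θ) ^ (2+1) / (N:ℝ) ^ 2 = (N:ℝ) / θ ^ 3 := by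
      rw [div_pow, div_div, div_eq_div_iff (mul_pos (pow_pos hθ _) (pow_pos hNpos _)).ne'
        (pow_pos hθ 3).ne']; ring
    calc (N:ℝ) / θ ^ 3 = ((N:ℝ)/θ) ^ (2+1) / (N:ℝ) ^ 2 := e.symm
      _ ≤ ∑ k, (1 / a k) ^ (2+1) := hJ
  have hsum_ge : (N:ℝ) / (8 * B ^ 3) ≤ ∑ k, c k := by
    have h1 : (2/3) * ((N:ℝ) / θ ^ 3) ≤ ∑ k, c k := by
      calc (2/3) * ((N:ℝ) / θ ^ 3) ≤ (2/3) * ∑ k, (1 / a k) ^ 3 := by linarith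
        _ = ∑ k, 2 / 3 * (1 / a k) ^ 3 := by rw [Finset.mul_sum]
        _ ≤ ∑ k, c k := Finset.sum_le_sum fun k _ => hlow k
    have h2 : (N:ℝ) / (8 * B ^ 3) ≤ (2/3) * ((N:ℝ) / θ ^ 3) := by
      have hθ3 : (0:ℝ) < θ ^ 3 := by positivity
      have hB3 : θ ^ 3 ≤ B ^ 3 := pow_le_pow_left₀ hθ.le hθB 3
      have h2a : (N:ℝ) / B ^ 3 ≤ (N:ℝ) / θ ^ 3 := by gcongr
      have h2b : (0:ℝ) ≤ (N:ℝ) / θ ^ 3 := div_nonneg hNpos.le hθ3.le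
      have h2c : (N:ℝ) / (8 * B ^ 3) = 1 / 8 * ((N:ℝ) / B ^ 3) := by ring
      rw [h2c]
      linarith
    linarith
  have hsum_le : ∑ k, c k ≤ (N:ℝ) * (8 / δ ^ 3) := by
    calc ∑ k, c k ≤ ∑ _k : Fin N, 8 / δ ^ 3 := Finset.sum_le_sum fun k _ => hupp k
      _ = (N:ℝ) * (8 / δ ^ 3) := by
        rw [Finset.sum_const, Finset.card_univ, Fintype.card_fin, nsmul_eq_mul]
  constructor
  · rw [habs]
    calc |ξ| / (8 * B ^ 3) = |ξ| / N * ((N:ℝ) / (8 * B ^ 3)) := by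
          field_simp
      _ ≤ |ξ| / N * ∑ k, c k := by
          apply mul_le_mul_of_nonneg_left hsum_ge (by positivity)
  · rw [habs]
    calc |ξ| / N * ∑ k, c k ≤ |ξ| / N * ((N:ℝ) * (8 / δ ^ 3)) :=
          mul_le_mul_of_nonneg_left hsum_le (by positivity)
      _ = 8 * |ξ| / δ ^ 3 := by field_simp

lemma eigDesc_antitone {N : ℕ} (H : Matrix (Fin N) (Fin N) ℝ) (hH : H.IsHermitian) :
    Antitone (eigDesc H) := by
  intro i j hij
  simp only [eigDesc, dif_pos hH]
  exact Tuple.monotone_sort hH.eigenvalues (Fin.rev_le_rev.mpr hij)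

theorem stmt15 (δ B : ℝ) (hδ : 0 < δ) (hB : 0 < B) (N : ℕ) (hN : 1 ≤ N)
    (H : Matrix (Fin N) (Fin N) ℝ) (hH : H.IsHermitian) (hHnorm : opNorm H ≤ B)
    (θ : ℝ) (hθ0 : θ ≠ 0) (hθB : |θ| ≤ B)
    (z : ℝ) (hz : (1 / (N : ℝ)) * ∑ k, 1 / (z - eigDesc H k) = 1 / θ)
    (hsep : eigDesc H ⟨0, by omega⟩ + 2 * δ ≤ z ∨ z ≤ eigDesc H ⟨N - 1, by omega⟩ - 2 * δ)
    (ξ : ℝ) (hξ : |ξ| ≤ δ) :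
    |ξ| / (8 * B ^ 3)
        ≤ |(-(1 / (N : ℝ)) * ∑ k, 1 / (z + ξ - eigDesc H k) ^ 2)
            - (-(1 / (N : ℝ)) * ∑ k, 1 / (z - eigDesc H k) ^ 2)| ∧
    |(-(1 / (N : ℝ)) * ∑ k, 1 / (z + ξ - eigDesc H k) ^ 2)
        - (-(1 / (N : ℝ)) * ∑ k, 1 / (z - eigDesc H k) ^ 2)| ≤ 8 * |ξ| / δ ^ 3 := by
  have hNpos : (0:ℝ) < N := by exact_mod_cast hN
  have hanti := eigDesc_antitone H hH
  have hne : (Finset.univ : Finset (Fin N)).Nonempty := ⟨⟨0, by omega⟩, Finset.mem_univ _⟩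
  rcases hsep with hsep | hsep
  · -- z above the spectrum
    have ha : ∀ k, 2 * δ ≤ z - eigDesc H k := by
      intro k
      have : eigDesc H k ≤ eigDesc H ⟨0, by omega⟩ :=
        hanti (by exact Fin.mk_le_of_le_val (Nat.zero_le _))
      linarith
    have hθpos : 0 < θ := by
      have hpos : 0 < (1 / (N : ℝ)) * ∑ k, 1 / (z - eigDesc H k) := by
        apply mul_pos (by positivity)
        exact Finset.sum_pos (fun k _ => by have := ha k; exact one_div_pos.mpr (by linarith)) hne
      rw [hz] at hpos
      exact (one_div_pos.mp hpos)
    have hθB' : θ ≤ B := le_trans (le_abs_self θ) hθB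
    have key := key_aux hN (fun k => z - eigDesc H k) δ θ B ξ hδ hθpos hθB' hξ ha hz
    simp_rw [show ∀ k : Fin N, z + ξ - eigDesc H k = (z - eigDesc H k) + ξ
      from fun k => by ring]
    exact key
  · -- z below the spectrum
    have ha : ∀ k, 2 * δ ≤ eigDesc H k - z := by
      intro k
      have : eigDesc H ⟨N - 1, by omega⟩ ≤ eigDesc H k := by
        apply hanti
        exact Fin.le_def.mpr (by simp; omega)
      linarith
    have hz2 : (1 / (N : ℝ)) * ∑ k, 1 / (eigDesc H k - z) = 1 / (-θ) := by
      have e1 : ∀ k : Fin N, (1:ℝ) / (eigDesc H k - z) = -(1 / (z - eigDesc H k)) := by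
        intro k
        rw [show eigDesc H k - z = -(z - eigDesc H k) from by ring, one_div,
          inv_neg, one_div]
      rw [Finset.sum_congr rfl fun k _ => e1 k, Finset.sum_neg_distrib, mul_neg, hz,
        div_neg]
    have hθneg : 0 < -θ := by
      have hpos : 0 < (1 / (N : ℝ)) * ∑ k, 1 / (eigDesc H k - z) := by
        apply mul_pos (by positivity)
        exact Finset.sum_pos (fun k _ => by have := ha k; exact one_div_pos.mpr (by linarith)) hne
      rw [hz2] at hpos
      exact (one_div_pos.mp hpos)
    have hθB' : -θ ≤ B := le_trans (neg_le_abs θ) hθB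
    have hξ' : |(-ξ)| ≤ δ := by rwa [abs_neg]
    have key := key_aux hN (fun k => eigDesc H k - z) δ (-θ) B (-ξ) hδ hθneg hθB' hξ' ha hz2
    rw [abs_neg] at key
    simp_rw [show ∀ k : Fin N, (z + ξ - eigDesc H k) ^ 2 = ((eigDesc H k - z) + -ξ) ^ 2
      from fun k => by ring,
      show ∀ k : Fin N, (z - eigDesc H k) ^ 2 = (eigDesc H k - z) ^ 2
      from fun k => by ring]
    exact key
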